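/- arXiv:2203.03408 — 3 statements merged into one kernel-verified Lean document; each statement's English description precedes it below -/
import Mathlib

section
/- If (u_1,…,u_N) ∈ 𝒰, i.e. there exists an integer m₀ such that A^{m₀}u_j ∈ ℤ^d for every j = 1,…,N and the N cosets A^{m₀}u_j + Aℤ^d are pairwise distinct, then the iterated function system (T_1,…,T_N) defined by T_j x := A^{-1}x + u_j does not have exact overlaps. -/
open MeasureTheory Filter Topology ENNReal

noncomputable section

/-- `wordComp T j = T (j 0) ∘ T (j 1) ∘ ⋯ ∘ T (j (n-1))`. -/
def wordComp {E : Type*} {N : ℕ} (T : Fin N → E → E) :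
    ∀ {n : ℕ}, (Fin n → Fin N) → E → E
  | 0, _ => id
  | _ + 1, j => T (j 0) ∘ wordComp T (fun i => j i.succ)

/-- The iterated function system `(T 1, …, T N)` has exact overlaps. -/
def HasExactOverlaps {E : Type*} {N : ℕ} (T : Fin N → E → E) : Prop :=
  ∃ (n : ℕ) (j k : Fin n → Fin N), 1 ≤ n ∧ j ≠ k ∧ wordComp T j = wordComp T k

/-- The iterated function system `(T 1, …, T N)` satisfies the open set condition. -/
def SatisfiesOSC {E : Type*} [TopologicalSpace E] {N : ℕ} (T : Fin N → E → E) : Prop :=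
  ∃ U : Set E, U.Nonempty ∧ IsOpen U ∧ (∀ j, T j '' U ⊆ U) ∧
    ∀ j k, j ≠ k → T j '' U ∩ T k '' U = ∅

/-- `Λ = ⋃_{m ≥ 0} A^{-m} ℤ^d`, as a subset of Euclidean space. -/
def lam {d : ℕ} (A : Matrix (Fin d) (Fin d) ℝ) : Set (EuclideanSpace ℝ (Fin d)) :=
  {x | ∃ (m : ℕ) (v : Fin d → ℤ),
    x = Matrix.toEuclideanLin (A⁻¹ ^ m) ((WithLp.equiv 2 (Fin d → ℝ)).symm fun i => (v i : ℝ))}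

open Matrix in
/-- Core arithmetic lemma over ℤ: if the digits lie in pairwise distinct cosets modulo
`Az ℤ^d`, then radix expansions are injective. -/
lemma core_lemma {d N : ℕ} (Az : Matrix (Fin d) (Fin d) ℤ)
    (hinj : Function.Injective Az.mulVec)
    (z : Fin N → Fin d → ℤ)
    (hdist : ∀ j k : Fin N, j ≠ k → ¬ ∃ v : Fin d → ℤ, z j - z k = Az *ᵥ v) :
    ∀ (n : ℕ) (j k : Fin n → Fin N),
      (∑ i : Fin n, (Az ^ (i : ℕ)) *ᵥ z (j i)) = (∑ i : Fin n, (Az ^ (i : ℕ)) *ᵥ z (k i)) →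
      j = k := by
  intro n
  induction n with
  | zero => intro j k _; funext i; exact i.elim0
  | succ n ih =>
    intro j k h
    rw [Fin.sum_univ_succ, Fin.sum_univ_succ] at h
    have hpow : ∀ (i : Fin n) (w : Fin d → ℤ),
        (Az ^ ((i.succ : Fin (n + 1)) : ℕ)) *ᵥ w = Az *ᵥ ((Az ^ (i : ℕ)) *ᵥ w) := by
      intro i w
      rw [Matrix.mulVec_mulVec, Fin.val_succ, pow_succ']
    have hsum : ∀ (f : Fin n → Fin d → ℤ),
        (∑ i : Fin n, Az *ᵥ f i) = Az *ᵥ (∑ i : Fin n, f i) := by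
      intro f
      simp only [← Matrix.mulVecLin_apply]
      rw [map_sum]
    simp only [hpow] at h
    rw [hsum, hsum] at h
    simp only [Fin.val_zero, pow_zero, Matrix.one_mulVec] at h
    have h0 : j 0 = k 0 := by
      by_contra hne
      refine hdist _ _ hne ⟨(∑ i : Fin n, (Az ^ (i : ℕ)) *ᵥ z (k i.succ))
        - ∑ i : Fin n, (Az ^ (i : ℕ)) *ᵥ z (j i.succ), ?_⟩
      rw [Matrix.mulVec_sub]
      exact sub_eq_sub_iff_add_eq_add.mpr (h.trans (add_comm _ _))
    rw [h0] at h
    have hS := hinj (add_left_cancel h)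
    have htail := ih (fun i => j i.succ) (fun i => k i.succ) hS
    funext i
    refine Fin.cases h0 (fun i => congrFun htail i) i

/-- Formula for the composition of the affine maps in a word. -/
lemma wordComp_affine {d N : ℕ} (A : Matrix (Fin d) (Fin d) ℝ)
    (u : Fin N → EuclideanSpace ℝ (Fin d))
    (T : Fin N → EuclideanSpace ℝ (Fin d) → EuclideanSpace ℝ (Fin d))
    (hT : ∀ j x, T j x = Matrix.toEuclideanLin A⁻¹ x + u j) :
    ∀ (n : ℕ) (j : Fin n → Fin N) (x : EuclideanSpace ℝ (Fin d)),
      wordComp T j x = Matrix.toEuclideanLin (A⁻¹ ^ n) x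
        + ∑ i : Fin n, Matrix.toEuclideanLin (A⁻¹ ^ (i : ℕ)) (u (j i)) := by
  have hcomp : ∀ (M P : Matrix (Fin d) (Fin d) ℝ) (y : EuclideanSpace ℝ (Fin d)),
      Matrix.toEuclideanLin M (Matrix.toEuclideanLin P y)
        = Matrix.toEuclideanLin (M * P) y := by
    intro M P y
    simp [Matrix.toEuclideanLin_apply, Matrix.mulVec_mulVec]
  have hone : ∀ (y : EuclideanSpace ℝ (Fin d)), Matrix.toEuclideanLin (1 : Matrix (Fin d) (Fin d) ℝ) y = y := by
    intro y
    simp [Matrix.toEuclideanLin_apply, Matrix.one_mulVec]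
  intro n
  induction n with
  | zero =>
    intro j x
    simp only [wordComp, id_eq, pow_zero, hone, Finset.univ_eq_empty, Finset.sum_empty, add_zero]
  | succ n ih =>
    intro j x
    show T (j 0) (wordComp T (fun i => j i.succ) x) = _
    rw [hT, ih]
    rw [map_add, map_sum]
    simp only [hcomp]
    rw [Fin.sum_univ_succ]
    simp only [Fin.val_zero, pow_zero, hone, Fin.val_succ]
    have h1 : A⁻¹ * A⁻¹ ^ n = A⁻¹ ^ (n + 1) := (pow_succ' A⁻¹ n).symm
    have h2 : ∀ i : Fin n, A⁻¹ * A⁻¹ ^ (i : ℕ) = A⁻¹ ^ ((i : ℕ) + 1) := fun i => (pow_succ' A⁻¹ i).symm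
    rw [h1]
    simp only [h2]
    abel

open Matrix in
theorem stmt5 (d : ℕ) (hd : 0 < d) (A : Matrix (Fin d) (Fin d) ℝ)
    (hAint : ∀ i j, ∃ z : ℤ, A i j = z)
    (hAeig : ∀ z : ℂ, (Matrix.charpoly (A.map ((↑) : ℝ → ℂ))).IsRoot z → 1 < ‖z‖)
    (N : ℕ) (hN : (N : ℝ) = |A.det|)
    (u : Fin N → EuclideanSpace ℝ (Fin d)) (hu : ∀ j, u j ∈ lam A)
    (T : Fin N → EuclideanSpace ℝ (Fin d) → EuclideanSpace ℝ (Fin d))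
    (hT : ∀ j x, T j x = Matrix.toEuclideanLin A⁻¹ x + u j)
    (m₀ : ℤ)
    (hint : ∀ j, ∃ v : Fin d → ℤ,
      Matrix.toEuclideanLin (A ^ m₀) (u j)
        = (WithLp.equiv 2 (Fin d → ℝ)).symm fun i => (v i : ℝ))
    (hdistinct : ∀ j k, j ≠ k →
      ¬ ∃ v : Fin d → ℤ,
        Matrix.toEuclideanLin (A ^ m₀) (u j) - Matrix.toEuclideanLin (A ^ m₀) (u k)
          = Matrix.toEuclideanLin A ((WithLp.equiv 2 (Fin d → ℝ)).symm fun i => (v i : ℝ))) :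
    ¬ HasExactOverlaps T := by
  classical
  -- the integer matrix underlying A
  choose Az hAz using hAint
  set AZ : Matrix (Fin d) (Fin d) ℤ := Matrix.of Az with hAZ
  have hA : A = AZ.map ((Int.castRingHom ℝ) : ℤ → ℝ) := by
    ext i j
    simp [hAZ, Matrix.map_apply, hAz i j]
  -- the determinant of A is nonzero
  have hdet : A.det ≠ 0 := by
    intro h
    have hdc : (A.map ((↑) : ℝ → ℂ)).det = 0 := by
      have := (RingHom.map_det Complex.ofRealHom A).symm
      rw [h] at this
      simp at this; exact this
    have h0 : (Matrix.charpoly (A.map ((↑) : ℝ → ℂ))).IsRoot 0 := by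
      have hc := Matrix.det_eq_sign_charpoly_coeff (A.map ((↑) : ℝ → ℂ))
      rw [hdc] at hc
      have : (Matrix.charpoly (A.map ((↑) : ℝ → ℂ))).coeff 0 = 0 := by
        rcases mul_eq_zero.mp hc.symm with h' | h'
        · exact absurd h' (pow_ne_zero _ (by norm_num))
        · exact h'
      rwa [Polynomial.IsRoot, ← Polynomial.coeff_zero_eq_eval_zero]
    have := hAeig 0 h0
    simp only [norm_zero] at this
    norm_num at this
  have hU : IsUnit A.det := isUnit_iff_ne_zero.mpr hdet
  have hAinjR : Function.Injective A.mulVec :=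
    Matrix.mulVec_injective_iff_isUnit.mpr ((Matrix.isUnit_iff_isUnit_det A).mpr hU)
  -- casting facts
  set cv : (Fin d → ℤ) → (Fin d → ℝ) := fun v i => (v i : ℝ) with hcv
  have hcast : ∀ (s : ℕ) (w : Fin d → ℤ), (A ^ s) *ᵥ cv w = cv ((AZ ^ s) *ᵥ w) := by
    intro s w
    have h1 : A ^ s = (AZ ^ s).map ((Int.castRingHom ℝ) : ℤ → ℝ) := by
      rw [hA]
      exact (map_pow ((Int.castRingHom ℝ).mapMatrix) AZ s).symm
    funext i
    rw [h1]
    exact ((Int.castRingHom ℝ).map_mulVec (AZ ^ s) w i).symm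
  have hcvsub : ∀ v w : Fin d → ℤ, cv (v - w) = cv v - cv w := by
    intro v w; funext i; simp [hcv]
  have hcvinj : Function.Injective cv := by
    intro v w hvw
    funext i
    have h := congrFun hvw i
    simp only [hcv] at h
    exact_mod_cast h
  have hAZinj : Function.Injective AZ.mulVec := by
    intro v w hvw
    apply hcvinj
    apply hAinjR
    show A *ᵥ cv v = A *ᵥ cv w
    have h1 := hcast 1 v
    have h2 := hcast 1 w
    simp only [pow_one] at h1 h2
    rw [h1, h2, hvw]
  -- digits
  choose z hz using hint
  have hdistZ : ∀ j k : Fin N, j ≠ k → ¬ ∃ v : Fin d → ℤ, z j - z k = AZ *ᵥ v := by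
    rintro j k hne ⟨v, hv⟩
    apply hdistinct j k hne
    refine ⟨v, ?_⟩
    rw [hz j, hz k, WithLp.equiv_symm_apply, Matrix.toEuclideanLin_apply_piLp_toLp]
    have hc : cv (z j) - cv (z k) = A *ᵥ cv v := by
      rw [← hcvsub, hv]
      have h1 := hcast 1 v
      simp only [pow_one] at h1
      exact h1.symm
    show (WithLp.equiv 2 (Fin d → ℝ)).symm (cv (z j)) - (WithLp.equiv 2 (Fin d → ℝ)).symm (cv (z k))
      = (WithLp.equiv 2 (Fin d → ℝ)).symm (A *ᵥ cv v)
    rw [← hc]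
    rfl
  -- main argument
  rintro ⟨n, j, k, hn, hjk, heq⟩
  apply hjk
  obtain ⟨m, rfl⟩ : ∃ m, n = m + 1 := ⟨n - 1, by omega⟩
  -- the sum equation
  have hsums : (∑ i : Fin (m + 1), Matrix.toEuclideanLin (A⁻¹ ^ (i : ℕ)) (u (j i)))
      = ∑ i : Fin (m + 1), Matrix.toEuclideanLin (A⁻¹ ^ (i : ℕ)) (u (k i)) := by
    have := congrFun heq 0
    rw [wordComp_affine A u T hT _ j 0, wordComp_affine A u T hT _ k 0] at this
    simpa using this
  have hcomp : ∀ (M P : Matrix (Fin d) (Fin d) ℝ) (y : EuclideanSpace ℝ (Fin d)),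
      Matrix.toEuclideanLin M (Matrix.toEuclideanLin P y)
        = Matrix.toEuclideanLin (M * P) y := by
    intro M P y
    simp [Matrix.toEuclideanLin_apply, Matrix.mulVec_mulVec]
  -- apply toEuclideanLin (A ^ m₀ * A ^ m) to both sides
  set P : Matrix (Fin d) (Fin d) ℝ := A ^ m₀ * A ^ m with hP
  have hPi : ∀ (jj : Fin N) (i : Fin (m + 1)),
      Matrix.toEuclideanLin P (Matrix.toEuclideanLin (A⁻¹ ^ (i : ℕ)) (u jj))
        = (WithLp.equiv 2 (Fin d → ℝ)).symm (cv ((AZ ^ (m - (i : ℕ))) *ᵥ z jj)) := by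
    intro jj i
    rw [hcomp]
    have hle : (i : ℕ) ≤ m := by omega
    have hmul : P * A⁻¹ ^ (i : ℕ) = A ^ (m - (i : ℕ)) * A ^ m₀ := by
      rw [hP, Matrix.inv_pow', Matrix.mul_assoc, ← Matrix.pow_sub' A hU hle]
      exact (Matrix.Commute.zpow_left ((Commute.refl A).pow_right (m - (i : ℕ))) m₀).eq
    rw [hmul, ← hcomp, hz jj, WithLp.equiv_symm_apply, Matrix.toEuclideanLin_apply_piLp_toLp]
    rw [hcast (m - (i : ℕ)) (z jj)]
  rw [← sub_eq_zero] at hsums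
  have key : (∑ i : Fin (m + 1), (AZ ^ (m - (i : ℕ))) *ᵥ z (j i))
      = ∑ i : Fin (m + 1), (AZ ^ (m - (i : ℕ))) *ᵥ z (k i) := by
    have h1 := congrArg (Matrix.toEuclideanLin P) hsums
    rw [map_sub, map_sum, map_sum, map_zero, sub_eq_zero] at h1
    simp only [hPi] at h1
    have h2 : (WithLp.equiv 2 (Fin d → ℝ)).symm (cv (∑ i : Fin (m + 1), (AZ ^ (m - (i : ℕ))) *ᵥ z (j i)))
        = (WithLp.equiv 2 (Fin d → ℝ)).symm (cv (∑ i : Fin (m + 1), (AZ ^ (m - (i : ℕ))) *ᵥ z (k i))) := by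
      have hcvsum : ∀ (f : Fin (m + 1) → Fin d → ℤ),
          (WithLp.equiv 2 (Fin d → ℝ)).symm (cv (∑ i, f i))
            = ∑ i, (WithLp.equiv 2 (Fin d → ℝ)).symm (cv (f i)) := by
        intro f
        have : cv (∑ i, f i) = ∑ i, cv (f i) := by
          funext t
          simp [hcv, Finset.sum_apply]
        rw [this]
        have hms := map_sum (WithLp.linearEquiv 2 ℝ (Fin d → ℝ)).symm
          (fun i => cv (f i)) Finset.univ
        simp only [WithLp.linearEquiv_symm_apply] at hms
        exact hms
      rw [hcvsum, hcvsum, h1]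
    exact hcvinj ((WithLp.equiv 2 (Fin d → ℝ)).symm.injective h2)
  -- reindex by Fin.rev and apply the core lemma
  have hrev : ∀ (w : Fin (m + 1) → Fin N),
      (∑ i : Fin (m + 1), (AZ ^ (m - (i : ℕ))) *ᵥ z (w i))
        = ∑ i : Fin (m + 1), (AZ ^ (i : ℕ)) *ᵥ z (w i.rev) := by
    intro w
    refine Fintype.sum_bijective Fin.rev Fin.rev_bijective _ _ (fun i => ?_)
    rw [Fin.rev_rev]
    have hval : ((Fin.rev i : Fin (m + 1)) : ℕ) = m - (i : ℕ) := by
      rw [Fin.val_rev]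
      omega
    rw [hval]
  rw [hrev j, hrev k] at key
  have := core_lemma AZ hAZinj z hdistZ (m + 1) (fun i => j i.rev) (fun i => k i.rev) key
  funext i
  have := congrFun this i.rev
  simpa [Fin.rev_rev] using this
end
end

section
/- Let w ∈ ℤ^d be nonzero and suppose (u_1,…,u_N) ∈ 𝒱_w, i.e. u_1,…,u_N ∈ Λ and ∑_{j=1}^N e^{2πi⟨Aⁿu_j, w⟩} ≠ 0 for every integer n ∈ ℤ. Set a_n := (1/N) ∑_{j=1}^N e^{2πi⟨A^{-n}u_j, w⟩} for n ∈ ℤ. Then ∑_{n∈ℤ} |a_n − 1| < ∞, every a_n is nonzero, and the doubly infinite product ∏_{n∈ℤ} a_n converges to a nonzero complex number. -/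
open MeasureTheory Filter Topology ENNReal

noncomputable section

/- ### Auxiliary lemmas -/

lemma exp_I_bound (x : ℝ) : ‖Complex.exp ((x : ℂ) * Complex.I) - 1‖ ≤ |x| := by
  have e1 : Complex.exp (((x / 2 : ℝ) : ℂ) * Complex.I) *
      Complex.exp (((x / 2 : ℝ) : ℂ) * Complex.I) = Complex.exp ((x : ℂ) * Complex.I) := by
    rw [← Complex.exp_add, ← add_mul]
    norm_num
  have e2 : Complex.exp (((x / 2 : ℝ) : ℂ) * Complex.I) *
      Complex.exp (-(((x / 2 : ℝ) : ℂ) * Complex.I)) = 1 := by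
    rw [← Complex.exp_add, add_neg_cancel, Complex.exp_zero]
  have key : Complex.exp ((x : ℂ) * Complex.I) - 1 =
      Complex.exp (((x / 2 : ℝ) : ℂ) * Complex.I) *
        (2 * Complex.sin (((x / 2 : ℝ) : ℂ)) * Complex.I) := by
    rw [Complex.sin]
    have hneg : Complex.exp (-((x / 2 : ℝ) : ℂ) * Complex.I) =
        Complex.exp (-(((x / 2 : ℝ) : ℂ) * Complex.I)) := by rw [neg_mul]
    rw [hneg]
    linear_combination (Complex.I ^ 2) * e1 - (Complex.I ^ 2) * e2 +
      (Complex.exp ((x : ℂ) * Complex.I) - 1) * Complex.I_sq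
  rw [key, norm_mul, norm_mul, norm_mul, Complex.norm_exp_ofReal_mul_I, one_mul, Complex.norm_I,
    mul_one, ← Complex.ofReal_sin, Complex.norm_real, Real.norm_eq_abs, Complex.norm_two]
  calc (2 : ℝ) * |Real.sin (x / 2)| ≤ 2 * |x / 2| :=
        mul_le_mul_of_nonneg_left Real.abs_sin_le_abs (by norm_num)
    _ = |x| := by rw [abs_div, abs_two]; ring

lemma matrix_mem_spectrum_iff {d : ℕ} (M : Matrix (Fin d) (Fin d) ℂ) (μ : ℂ) :
    μ ∈ spectrum ℂ M ↔ M.charpoly.IsRoot μ := by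
  rw [spectrum.mem_iff, Polynomial.IsRoot.def]
  have heval : M.charpoly.eval μ = (algebraMap ℂ (Matrix (Fin d) (Fin d) ℂ) μ - M).det := by
    rw [Matrix.charpoly, eval_det, Matrix.matPolyEquiv_charmatrix]
    simp [Matrix.algebraMap_eq_diagonal, Matrix.scalar_apply, Pi.algebraMap_def]
  rw [heval, Matrix.isUnit_iff_isUnit_det, isUnit_iff_ne_zero, not_not]


lemma map_pow_hom {R S : Type*} [CommRing R] [CommRing S] (f : R →+* S) {d : ℕ}
    (P : Matrix (Fin d) (Fin d) R) (k : ℕ) : (P ^ k).map f = (P.map f) ^ k := by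
  induction k with
  | zero => simp [Matrix.map_one f f.map_zero f.map_one]
  | succ k ih => rw [pow_succ, pow_succ, Matrix.map_mul, ih]

lemma abs_avg_exp_sub_one_le {N : ℕ} (hNC : (N : ℂ) ≠ 0) (θ : Fin N → ℝ) (c : Fin N → ℝ)
    (hc : ∀ j, |θ j| ≤ c j) :
    ‖(N : ℂ)⁻¹ * ∑ j, Complex.exp (((2 * Real.pi * θ j : ℝ) : ℂ) * Complex.I) - 1‖
      ≤ (N : ℝ)⁻¹ * ∑ j, 2 * Real.pi * c j := by
  have h1 : (N : ℂ)⁻¹ * (∑ j, Complex.exp (((2 * Real.pi * θ j : ℝ) : ℂ) * Complex.I)) - 1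
      = (N : ℂ)⁻¹ * ∑ j, (Complex.exp (((2 * Real.pi * θ j : ℝ) : ℂ) * Complex.I) - 1) := by
    rw [Finset.sum_sub_distrib, Finset.sum_const, Finset.card_univ, Fintype.card_fin,
      nsmul_eq_mul, mul_one, mul_sub, inv_mul_cancel₀ hNC]
  rw [h1, norm_mul, norm_inv, Complex.norm_natCast]
  refine mul_le_mul_of_nonneg_left ?_ (by positivity)
  refine le_trans (norm_sum_le _ _) (Finset.sum_le_sum fun j _ => ?_)
  refine le_trans (exp_I_bound (2 * Real.pi * θ j)) ?_
  rw [abs_mul, abs_of_nonneg (by positivity : (0:ℝ) ≤ 2 * Real.pi)]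
  exact mul_le_mul_of_nonneg_left (hc j) (by positivity)

section MatrixNorm

open scoped NNReal

open Matrix

attribute [local instance] Matrix.linftyOpNormedRing Matrix.linftyOpNormedAlgebra

lemma summable_pow_norm {d : ℕ} (hd : 0 < d) (M : Matrix (Fin d) (Fin d) ℂ)
    (h : ∀ μ ∈ spectrum ℂ M, ‖μ‖₊ < 1) : Summable (fun n : ℕ => ‖M ^ n‖) := by
  haveI : Nonempty (Fin d) := Fin.pos_iff_nonempty.mp hd
  have hρ : spectralRadius ℂ M < 1 := by
    simpa using spectrum.spectralRadius_lt_of_forall_lt (a := M) (r := 1) h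
  obtain ⟨r, hr1, hr2⟩ := ENNReal.lt_iff_exists_nnreal_btwn.mp hρ
  have hr2' : (r : ℝ) < 1 := by exact_mod_cast hr2
  have htend := spectrum.pow_nnnorm_pow_one_div_tendsto_nhds_spectralRadius M
  have hev : ∀ᶠ n : ℕ in atTop, (‖M ^ n‖₊ : ℝ≥0∞) ^ (1 / (n : ℝ)) < (r : ℝ≥0∞) :=
    htend.eventually_lt_const hr1
  have hev2 : ∀ᶠ n : ℕ in atTop, ‖M ^ n‖ ≤ (r : ℝ) ^ n := by
    filter_upwards [hev, eventually_ge_atTop 1] with n hn hn1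
    have hn0 : (n : ℝ) ≠ 0 := Nat.cast_ne_zero.mpr (by omega)
    have h2 : ((‖M ^ n‖₊ : ℝ≥0∞) ^ (1 / (n : ℝ))) ^ (n : ℝ) < ((r : ℝ≥0∞)) ^ (n : ℝ) :=
      ENNReal.rpow_lt_rpow hn (by positivity)
    rw [← ENNReal.rpow_mul, one_div, inv_mul_cancel₀ hn0, ENNReal.rpow_one,
      ENNReal.rpow_natCast, ← ENNReal.coe_pow, ENNReal.coe_lt_coe] at h2
    have : ‖M ^ n‖ ≤ ((r ^ n : ℝ≥0) : ℝ) := by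
      exact_mod_cast le_of_lt h2
    simpa using this
  have hgeom : Summable (fun n : ℕ => (r : ℝ) ^ n) :=
    summable_geometric_of_lt_one r.coe_nonneg hr2'
  refine Summable.of_norm_bounded_eventually_nat hgeom ?_
  filter_upwards [hev2] with n hn
  simpa [abs_of_nonneg (norm_nonneg _)] using hn

theorem stmt14 (d : ℕ) (hd : 0 < d) (A : Matrix (Fin d) (Fin d) ℝ)
    (hAint : ∀ i j, ∃ z : ℤ, A i j = z)
    (hAeig : ∀ z : ℂ, (Matrix.charpoly (A.map ((↑) : ℝ → ℂ))).IsRoot z → 1 < ‖z‖)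
    (N : ℕ) (hN : (N : ℝ) = |A.det|) (hN2 : 2 < N)
    (w : Fin d → ℤ) (hw : w ≠ 0)
    (u : Fin N → EuclideanSpace ℝ (Fin d)) (hu : ∀ j, u j ∈ lam A)
    (hV : ∀ n : ℤ,
      (∑ j, Complex.exp ((2 * Real.pi *
        (inner ℝ (Matrix.toEuclideanLin (A ^ n) (u j))
          ((WithLp.equiv 2 (Fin d → ℝ)).symm fun i => (w i : ℝ)) : ℝ) : ℝ) * Complex.I))
        ≠ 0)
    (a : ℤ → ℂ)
    (ha : ∀ n : ℤ, a n = (N : ℂ)⁻¹ *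
      ∑ j, Complex.exp ((2 * Real.pi *
        (inner ℝ (Matrix.toEuclideanLin (A ^ (-n)) (u j))
          ((WithLp.equiv 2 (Fin d → ℝ)).symm fun i => (w i : ℝ)) : ℝ) : ℝ) * Complex.I)) :
    Summable (fun n : ℤ => ‖a n - 1‖) ∧ (∀ n, a n ≠ 0) ∧
      ∃ P : ℂ, P ≠ 0 ∧ HasProd a P := by
  haveI : Nonempty (Fin d) := Fin.pos_iff_nonempty.mp hd
  have hNR : (N : ℝ) ≠ 0 := Nat.cast_ne_zero.mpr (by omega)
  have hNC : (N : ℂ) ≠ 0 := by exact_mod_cast (Nat.cast_ne_zero (R := ℂ)).mpr (by omega)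
  have hdet : A.det ≠ 0 := by
    intro h
    rw [h, abs_zero, Nat.cast_eq_zero] at hN
    omega
  have hAdet : IsUnit A.det := isUnit_iff_ne_zero.mpr hdet
  -- part 2 : nonvanishing
  have ha2 : ∀ n, a n ≠ 0 := by
    intro n
    rw [ha n]
    exact mul_ne_zero (inv_ne_zero hNC) (hV (-n))
  -- basic setup
  have hπ : (0:ℝ) < Real.pi := Real.pi_pos
  set Ac : Matrix (Fin d) (Fin d) ℂ := A.map ((↑) : ℝ → ℂ) with hAc
  have hAcHom : Ac = A.map ⇑Complex.ofRealHom := rfl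
  have hAcdet : Ac.det ≠ 0 := by
    have hd1 : Ac.det = ((A.det : ℝ) : ℂ) := by
      rw [hAcHom]
      simpa [RingHom.mapMatrix_apply] using (Complex.ofRealHom.map_det A).symm
    rw [hd1]
    exact Complex.ofReal_ne_zero.mpr hdet
  have hBc : (A⁻¹).map ((↑) : ℝ → ℂ) = Ac⁻¹ := by
    refine (Matrix.inv_eq_right_inv ?_).symm
    have : Ac * (A⁻¹).map ((↑) : ℝ → ℂ) = (A * A⁻¹).map ⇑Complex.ofRealHom := by
      rw [Matrix.map_mul]; rfl
    rw [this, Matrix.mul_nonsing_inv A hAdet,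
      Matrix.map_one _ Complex.ofRealHom.map_zero Complex.ofRealHom.map_one]
  have hBcpow : ∀ k : ℕ, Ac⁻¹ ^ k = ((A⁻¹) ^ k).map ((↑) : ℝ → ℂ) := by
    intro k
    rw [← hBc]
    exact (map_pow_hom Complex.ofRealHom (A⁻¹) k).symm
  -- spectrum of Ac⁻¹ is inside the open unit disc
  have hspec : ∀ μ ∈ spectrum ℂ Ac⁻¹, ‖μ‖₊ < 1 := by
    intro μ hμ
    have hAcu : IsUnit Ac := (Matrix.isUnit_iff_isUnit_det Ac).mpr (isUnit_iff_ne_zero.mpr hAcdet)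
    have hU : (hAcu.unit : Matrix (Fin d) (Fin d) ℂ) = Ac := hAcu.unit_spec
    have hinvU : ((hAcu.unit⁻¹ : (Matrix (Fin d) (Fin d) ℂ)ˣ) : Matrix (Fin d) (Fin d) ℂ)
        = Ac⁻¹ := by
      rw [Matrix.coe_units_inv, hU]
    have hμ0 : μ ≠ 0 := by
      rintro rfl
      exact (spectrum.zero_notMem_iff ℂ).mpr (hinvU ▸ (hAcu.unit⁻¹).isUnit) hμ
    have h1 : ((Units.mk0 μ hμ0 : ℂˣ) : ℂ) ∈
        spectrum ℂ ((hAcu.unit⁻¹ : (Matrix (Fin d) (Fin d) ℂ)ˣ) : Matrix (Fin d) (Fin d) ℂ) := by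
      rw [hinvU]; exact hμ
    have h2 := spectrum.inv_mem_iff.mp h1
    rw [inv_inv, hU] at h2
    have hroot : (Matrix.charpoly Ac).IsRoot μ⁻¹ := by
      have := (matrix_mem_spectrum_iff Ac μ⁻¹).mp (by simpa using h2)
      exact this
    have hgt : 1 < ‖μ⁻¹‖ := hAeig μ⁻¹ hroot
    rw [norm_inv] at hgt
    have h0 : 0 < ‖μ‖ := norm_pos_iff.mpr hμ0
    have habs : ‖μ‖ < 1 := by
      by_contra hcon
      push_neg at hcon
      have : (‖μ‖)⁻¹ ≤ 1 := inv_le_one_of_one_le₀ hcon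
      linarith
    exact_mod_cast habs
  have hsum : Summable (fun n : ℕ => ‖Ac⁻¹ ^ n‖) := summable_pow_norm hd _ hspec
  -- computing inner products
  have hinner : ∀ (P : Matrix (Fin d) (Fin d) ℝ) (x : EuclideanSpace ℝ (Fin d)),
      (inner ℝ (Matrix.toEuclideanLin P x)
        ((WithLp.equiv 2 (Fin d → ℝ)).symm fun i => (w i : ℝ)) : ℝ)
        = ∑ i, (P *ᵥ (WithLp.equiv 2 (Fin d → ℝ) x)) i * (w i : ℝ) := by
    intro P x
    rw [WithLp.equiv_symm_apply, Matrix.toEuclideanLin_apply, EuclideanSpace.inner_toLp_toLp]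
    simp [dotProduct, mul_comm]
  -- bound on the inner products, positive side
  have hθbound : ∀ (n : ℕ) (j : Fin N),
      |(inner ℝ (Matrix.toEuclideanLin (A ^ (-(n:ℤ))) (u j))
        ((WithLp.equiv 2 (Fin d → ℝ)).symm fun i => (w i : ℝ)) : ℝ)|
        ≤ (∑ i, |(w i : ℝ)|) * (‖Ac⁻¹ ^ n‖ * ‖(fun k => ((u j k : ℝ) : ℂ))‖) := by
    intro n j
    have hz : A ^ (-(n:ℤ)) = A⁻¹ ^ n := by
      rw [Matrix.zpow_neg_natCast, Matrix.inv_pow']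
    rw [hz, hinner]
    have hvC : ∀ i, |((A⁻¹ ^ n) *ᵥ (WithLp.equiv 2 (Fin d → ℝ) (u j))) i|
        ≤ ‖Ac⁻¹ ^ n‖ * ‖(fun k => ((u j k : ℝ) : ℂ))‖ := by
      intro i
      have hcast : ((((A⁻¹ ^ n) *ᵥ (WithLp.equiv 2 (Fin d → ℝ) (u j))) i : ℝ) : ℂ)
          = ((Ac⁻¹ ^ n) *ᵥ (fun k => ((u j k : ℝ) : ℂ))) i := by
        rw [hBcpow]
        simp only [Matrix.mulVec, dotProduct, Matrix.map_apply]
        push_cast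
        rfl
      calc |(((A⁻¹ ^ n) *ᵥ (WithLp.equiv 2 (Fin d → ℝ) (u j))) i)|
          = ‖((((A⁻¹ ^ n) *ᵥ (WithLp.equiv 2 (Fin d → ℝ) (u j))) i : ℝ) : ℂ)‖ :=
            (Complex.norm_real _).symm
        _ = ‖((Ac⁻¹ ^ n) *ᵥ (fun k => ((u j k : ℝ) : ℂ))) i‖ := by
            rw [hcast]
        _ ≤ ‖(Ac⁻¹ ^ n) *ᵥ (fun k => ((u j k : ℝ) : ℂ))‖ := norm_le_pi_norm _ i
        _ ≤ ‖Ac⁻¹ ^ n‖ * ‖(fun k => ((u j k : ℝ) : ℂ))‖ := Matrix.linfty_opNorm_mulVec _ _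
    calc |∑ i, ((A⁻¹ ^ n) *ᵥ (WithLp.equiv 2 (Fin d → ℝ) (u j))) i * (w i : ℝ)|
        ≤ ∑ i, |((A⁻¹ ^ n) *ᵥ (WithLp.equiv 2 (Fin d → ℝ) (u j))) i * (w i : ℝ)| :=
          Finset.abs_sum_le_sum_abs _ _
      _ = ∑ i, |((A⁻¹ ^ n) *ᵥ (WithLp.equiv 2 (Fin d → ℝ) (u j))) i| * |(w i : ℝ)| := by
          simp [abs_mul]
      _ ≤ ∑ i, (‖Ac⁻¹ ^ n‖ * ‖(fun k => ((u j k : ℝ) : ℂ))‖) * |(w i : ℝ)| :=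
          Finset.sum_le_sum fun i _ => mul_le_mul_of_nonneg_right (hvC i) (abs_nonneg _)
      _ = (∑ i, |(w i : ℝ)|) * (‖Ac⁻¹ ^ n‖ * ‖(fun k => ((u j k : ℝ) : ℂ))‖) := by
          rw [Finset.sum_mul]
          exact Finset.sum_congr rfl fun i _ => by ring
  -- bound on |a n - 1| for n ≥ 0
  have habound : ∀ n : ℕ, ‖a (n:ℤ) - 1‖ ≤
      ((N:ℝ)⁻¹ * (2 * Real.pi * ((∑ i, |(w i : ℝ)|) *
        (∑ j, ‖(fun k => ((u j k : ℝ) : ℂ))‖)))) * ‖Ac⁻¹ ^ n‖ := by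
    intro n
    rw [ha (n:ℤ)]
    refine le_trans (abs_avg_exp_sub_one_le hNC _ _ (hθbound n)) ?_
    have hstep : ∀ j : Fin N, 2 * Real.pi * ((∑ i, |(w i : ℝ)|) *
        (‖Ac⁻¹ ^ n‖ * ‖(fun k => ((u j k : ℝ) : ℂ))‖))
        = (2 * Real.pi * (∑ i, |(w i : ℝ)|) * ‖Ac⁻¹ ^ n‖) * ‖(fun k => ((u j k : ℝ) : ℂ))‖ :=
      fun j => by ring
    rw [Finset.sum_congr rfl fun j _ => hstep j, ← Finset.mul_sum]
    apply le_of_eq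
    ring
  have hSpos : Summable (fun n : ℕ => ‖a (n:ℤ) - 1‖) := by
    refine Summable.of_nonneg_of_le (fun n => norm_nonneg _) habound ?_
    exact hsum.mul_left _
  -- negative side : a (-n) = 1 for n large
  choose m v hmv using hu
  have hcompose : ∀ (P Q : Matrix (Fin d) (Fin d) ℝ) (y : EuclideanSpace ℝ (Fin d)),
      Matrix.toEuclideanLin P (Matrix.toEuclideanLin Q y) = Matrix.toEuclideanLin (P * Q) y := by
    intro P Q y
    rw [Matrix.toEuclideanLin_apply, Matrix.toEuclideanLin_apply, Matrix.toEuclideanLin_apply]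
    simp
  choose A0f hA0 using hAint
  have hAmap : A = (Matrix.of A0f).map (Int.cast : ℤ → ℝ) := by
    ext i j
    simpa [Matrix.map_apply] using hA0 i j
  have hint : ∀ (B : Matrix (Fin d) (Fin d) ℤ) (vv : Fin d → ℤ),
      ∃ k : ℤ, (inner ℝ (Matrix.toEuclideanLin (B.map (Int.cast : ℤ → ℝ))
          ((WithLp.equiv 2 (Fin d → ℝ)).symm fun i => ((vv i : ℝ))))
          ((WithLp.equiv 2 (Fin d → ℝ)).symm fun i => (w i : ℝ)) : ℝ) = (k : ℝ) := by
    intro B vv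
    refine ⟨∑ i, (B *ᵥ vv) i * w i, ?_⟩
    rw [WithLp.equiv_symm_apply, Matrix.toEuclideanLin_apply_piLp_toLp, EuclideanSpace.inner_toLp_toLp]
    simp only [dotProduct, Matrix.mulVec, Matrix.map_apply, star_trivial]
    push_cast
    exact Finset.sum_congr rfl fun i _ => mul_comm _ _
  have hval : ∀ n : ℕ, Finset.univ.sup m ≤ n → a (-(n:ℤ)) = 1 := by
    intro n hn
    rw [ha]
    have hterm : ∀ j : Fin N, Complex.exp ((2 * Real.pi *
        (inner ℝ (Matrix.toEuclideanLin (A ^ (-(-(n:ℤ)))) (u j))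
          ((WithLp.equiv 2 (Fin d → ℝ)).symm fun i => (w i : ℝ)) : ℝ) : ℝ) * Complex.I) = 1 := by
      intro j
      have hmj : m j ≤ n := le_trans (Finset.le_sup (Finset.mem_univ j)) hn
      have hz : A ^ (-(-(n:ℤ))) = A ^ n := by rw [neg_neg, zpow_natCast]
      have hpow : A ^ n * A⁻¹ ^ m j = A ^ (n - m j) := by
        rw [Matrix.inv_pow', ← Matrix.pow_sub' A hAdet hmj]
      have hAk : A ^ (n - m j) = ((Matrix.of A0f) ^ (n - m j)).map (Int.cast : ℤ → ℝ) := by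
        have h1 := map_pow_hom (Int.castRingHom ℝ) (Matrix.of A0f) (n - m j)
        simp only [Int.coe_castRingHom] at h1
        rw [h1, ← hAmap]
      obtain ⟨k, hk⟩ := hint ((Matrix.of A0f) ^ (n - m j)) (v j)
      have hre : (inner ℝ (Matrix.toEuclideanLin (A ^ (-(-(n:ℤ)))) (u j))
          ((WithLp.equiv 2 (Fin d → ℝ)).symm fun i => (w i : ℝ)) : ℝ) = (k : ℝ) := by
        rw [hz, hmv j, hcompose, hpow, hAk]
        exact hk
      rw [hre]
      have harg : (((2 * Real.pi * (k : ℝ) : ℝ)) : ℂ) * Complex.I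
          = (k : ℂ) * (2 * (Real.pi : ℂ) * Complex.I) := by
        push_cast
        ring
      rw [harg]
      exact Complex.exp_int_mul_two_pi_mul_I k
    rw [Finset.sum_congr rfl fun j _ => hterm j, Finset.sum_const, Finset.card_univ,
      Fintype.card_fin, nsmul_eq_mul, mul_one, inv_mul_cancel₀ hNC]
  have hSneg : Summable (fun n : ℕ => ‖a (-(n:ℤ)) - 1‖) := by
    refine Summable.of_norm_bounded_eventually_nat (summable_zero : Summable (fun _ : ℕ => (0:ℝ))) ?_
    filter_upwards [eventually_ge_atTop (Finset.univ.sup m)] with n hn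
    simp [hval n hn]
  have S1 : Summable (fun n : ℤ => ‖a n - 1‖) :=
    Summable.of_nat_of_neg hSpos hSneg
  -- infinite product
  have hlog : Summable (fun n : ℤ => Complex.log (a n)) := by
    have hten : Tendsto (fun n : ℤ => ‖a n - 1‖) cofinite (𝓝 0) :=
      S1.tendsto_cofinite_zero
    have hev : ∀ᶠ n in (cofinite : Filter ℤ),
        ‖Complex.log (a n)‖ ≤ (3/2) * ‖a n - 1‖ := by
      filter_upwards [hten.eventually (gt_mem_nhds (by norm_num : (0:ℝ) < 1/2))] with n hn
      have hsmall : ‖a n - 1‖ ≤ 1/2 := by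
        exact le_of_lt hn
      have := Complex.norm_log_one_add_half_le_self hsmall
      rw [show (1:ℂ) + (a n - 1) = a n by ring] at this
      exact this
    exact Summable.of_norm_bounded_eventually (S1.mul_left (3/2)) hev
  obtain ⟨L, hL⟩ := hlog
  refine ⟨S1, ha2, Complex.exp L, Complex.exp_ne_zero L, ?_⟩
  have hprod := hL.cexp
  have hfun : (Complex.exp ∘ fun n : ℤ => Complex.log (a n)) = a :=
    funext fun n => Complex.exp_log (ha2 n)
  rwa [hfun] at hprod
end MatrixNorm
end
end

section
/- Let w ∈ ℤ^d be nonzero and let u_1,…,u_{N-1} ∈ Λ. Then the set of integers n ∈ ℤ for which |∑_{j=1}^{N-1} e^{2πi⟨Aⁿu_j, w⟩}| = 1 is finite. -/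
open MeasureTheory Filter Topology ENNReal

noncomputable section

section Aux

open Matrix Polynomial

attribute [local instance] Matrix.linftyOpNormedRing Matrix.linftyOpNormedAlgebra
  Matrix.linftyOpNormedAddCommGroup

lemma aux_eval_charpoly {n : Type*} [Fintype n] [DecidableEq n] {R : Type*} [CommRing R]
    (M : Matrix n n R) (z : R) :
    M.charpoly.eval z = (Matrix.diagonal (fun _ => z) - M).det := by
  rw [Matrix.charpoly, ← Polynomial.coe_evalRingHom, RingHom.map_det]
  congr 1
  ext i j
  by_cases h : i = j <;> simp [charmatrix_apply, h, Matrix.diagonal_apply]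

lemma aux_mem_spectrum_iff_root {n : Type*} [Fintype n] [DecidableEq n] {K : Type*} [Field K]
    (M : Matrix n n K) (z : K) :
    z ∈ spectrum K M ↔ M.charpoly.IsRoot z := by
  rw [spectrum.mem_iff, Polynomial.IsRoot, aux_eval_charpoly, Matrix.algebraMap_eq_diagonal,
    Matrix.isUnit_iff_isUnit_det, isUnit_iff_ne_zero, not_ne_iff]
  have : (algebraMap K (n → K)) z = fun _ => z := rfl
  rw [this]

lemma aux_entry_nnnorm_le {d : ℕ} (M : Matrix (Fin d) (Fin d) ℂ) (i j : Fin d) :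
    ‖M i j‖₊ ≤ ‖M‖₊ := by
  rw [Matrix.linfty_opNNNorm_def]
  refine le_trans ?_ (Finset.le_sup (Finset.mem_univ i))
  exact Finset.single_le_sum (f := fun j' => ‖M i j'‖₊) (fun _ _ => zero_le) (Finset.mem_univ j)

lemma aux_pow_entry_tendsto_zero {d : ℕ} (B : Matrix (Fin d) (Fin d) ℂ)
    (hB : ∀ z ∈ spectrum ℂ B, ‖z‖₊ < 1) (i j : Fin d) :
    Tendsto (fun k => (B ^ k) i j) atTop (𝓝 0) := by
  haveI : CompleteSpace (Matrix (Fin d) (Fin d) ℂ) := FiniteDimensional.complete ℂ _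
  have hfin : (spectrum ℂ B).Finite := by
    refine Set.Finite.subset (Polynomial.finite_setOf_isRoot B.charpoly_monic.ne_zero) ?_
    intro z hz
    exact (aux_mem_spectrum_iff_root B z).1 hz
  have hρ : spectralRadius ℂ B < 1 := by
    refine lt_of_le_of_lt (iSup₂_le (fun z hz =>
      Finset.le_sup (f := fun z : ℂ => (‖z‖₊ : ℝ≥0∞)) (hfin.mem_toFinset.2 hz))) ?_
    rw [Finset.sup_lt_iff (by simp : (⊥ : ℝ≥0∞) < 1)]
    intro z hz
    exact_mod_cast hB z (hfin.mem_toFinset.1 hz)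
  obtain ⟨c, hc1, hc2⟩ := exists_between hρ
  have hgel := spectrum.pow_nnnorm_pow_one_div_tendsto_nhds_spectralRadius B
  have hev : ∀ᶠ k : ℕ in atTop, (‖B ^ k‖₊ : ℝ≥0∞) ≤ c ^ k := by
    filter_upwards [hgel.eventually_lt_const hc1, eventually_ge_atTop 1] with k hk hk1
    have hk0 : (k : ℝ) ≠ 0 := Nat.cast_ne_zero.2 (by omega)
    calc (‖B ^ k‖₊ : ℝ≥0∞) = ((‖B ^ k‖₊ : ℝ≥0∞) ^ (1/(k:ℝ))) ^ (k:ℝ) := by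
          rw [← ENNReal.rpow_mul, one_div, inv_mul_cancel₀ hk0, ENNReal.rpow_one]
      _ ≤ c ^ (k:ℝ) := le_of_lt (ENNReal.rpow_lt_rpow hk (by positivity))
      _ = c ^ k := ENNReal.rpow_natCast c k
  have hc0 : Tendsto (fun k : ℕ => c ^ k) atTop (𝓝 (0 : ℝ≥0∞)) :=
    ENNReal.tendsto_pow_atTop_nhds_zero_of_lt_one hc2
  have hnorm : Tendsto (fun k : ℕ => (‖B ^ k‖₊ : ℝ≥0∞)) atTop (𝓝 0) :=
    tendsto_of_tendsto_of_tendsto_of_le_of_le' tendsto_const_nhds hc0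
      (Eventually.of_forall fun _ => zero_le) hev
  have hentry : Tendsto (fun k : ℕ => (‖(B ^ k) i j‖₊ : ℝ≥0∞)) atTop (𝓝 0) :=
    tendsto_of_tendsto_of_tendsto_of_le_of_le' tendsto_const_nhds hnorm
      (Eventually.of_forall fun _ => zero_le)
      (Eventually.of_forall fun k => ENNReal.coe_le_coe.2 (aux_entry_nnnorm_le _ i j))
  rw [← ENNReal.coe_zero, ENNReal.tendsto_coe] at hentry
  rw [tendsto_zero_iff_norm_tendsto_zero]
  have := NNReal.tendsto_coe.2 hentry
  simpa [coe_nnnorm] using this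

lemma aux_spec_inv {d : ℕ} (Ac : Matrix (Fin d) (Fin d) ℂ) (hdet : IsUnit Ac.det)
    (h : ∀ z : ℂ, Ac.charpoly.IsRoot z → 1 < ‖z‖) :
    ∀ z ∈ spectrum ℂ Ac⁻¹, ‖z‖₊ < 1 := by
  intro z hz
  have hu : IsUnit Ac := (Matrix.isUnit_iff_isUnit_det Ac).2 hdet
  have hcoe : ((hu.unit⁻¹ : (Matrix (Fin d) (Fin d) ℂ)ˣ) : Matrix (Fin d) (Fin d) ℂ) = Ac⁻¹ := by
    rw [Matrix.coe_units_inv, hu.unit_spec]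
  rw [← hcoe, ← spectrum.map_inv, Set.mem_inv, hu.unit_spec] at hz
  have h1 : 1 < ‖z⁻¹‖ := h _ ((aux_mem_spectrum_iff_root Ac _).1 hz)
  have habs : ‖z‖ < 1 := by
    rcases eq_or_ne z 0 with rfl | hz0
    · simpa using one_pos
    · rw [norm_inv] at h1
      have hpos : 0 < ‖z‖ := norm_pos_iff.2 hz0
      exact (one_lt_inv_iff₀.mp h1).2
  have : ‖z‖ < 1 := habs
  exact_mod_cast this

end Aux

open Matrix in
theorem stmt16 (d : ℕ) (hd : 0 < d) (A : Matrix (Fin d) (Fin d) ℝ)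
    (hAint : ∀ i j, ∃ z : ℤ, A i j = z)
    (hAeig : ∀ z : ℂ, (Matrix.charpoly (A.map ((↑) : ℝ → ℂ))).IsRoot z → 1 < ‖z‖)
    (N : ℕ) (hN : (N : ℝ) = |A.det|) (hN2 : 2 < N)
    (w : Fin d → ℤ) (hw : w ≠ 0)
    (u : Fin (N - 1) → EuclideanSpace ℝ (Fin d)) (hu : ∀ j, u j ∈ lam A) :
    {n : ℤ | ‖
      (∑ j, Complex.exp ((2 * Real.pi *
        (inner ℝ (Matrix.toEuclideanLin (A ^ n) (u j))
          ((WithLp.equiv 2 (Fin d → ℝ)).symm fun i => (w i : ℝ)) : ℝ) : ℝ) * Complex.I))‖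
        = 1}.Finite := by
  classical
  have hdet0 : A.det ≠ 0 := by
    intro h
    rw [h, abs_zero] at hN
    have : N = 0 := by exact_mod_cast hN
    omega
  have hdet : IsUnit A.det := isUnit_iff_ne_zero.2 hdet0
  -- integer matrix representation
  choose Az hAz using hAint
  have hAmap : A = (Matrix.of Az).map ((↑) : ℤ → ℝ) := by
    ext i j
    simp [Matrix.map_apply, hAz i j]
  have hA_pow : ∀ p : ℕ, A ^ p = ((Matrix.of Az) ^ p).map ((↑) : ℤ → ℝ) := by
    intro p
    have : A = (Int.castRingHom ℝ).mapMatrix (Matrix.of Az) := hAmap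
    rw [this, ← map_pow, RingHom.mapMatrix_apply]
    rfl
  -- decomposition of the u j
  choose m v hv using hu
  set M₀ : ℕ := Finset.univ.sup m with hM₀
  set wv : EuclideanSpace ℝ (Fin d) := (WithLp.equiv 2 (Fin d → ℝ)).symm fun i => (w i : ℝ)
    with hwv
  -- Fact 1 : for n ≥ M₀, all inner products are integers
  have fact1 : ∀ n : ℤ, (M₀ : ℤ) ≤ n → ∀ j, ∃ z : ℤ,
      (inner ℝ (Matrix.toEuclideanLin (A ^ n) (u j)) wv : ℝ) = (z : ℝ) := by
    intro n hn j
    have hmj : (m j : ℤ) ≤ n :=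
      le_trans (by exact_mod_cast Finset.le_sup (f := m) (Finset.mem_univ j)) hn
    have hmul : A ^ n * A⁻¹ ^ (m j) = A ^ ((n - (m j : ℤ)).toNat) := by
      rw [Matrix.inv_pow', ← Matrix.zpow_neg_natCast, ← Matrix.zpow_add hdet,
        show n + -((m j : ℕ) : ℤ) = (((n - (m j : ℤ)).toNat : ℕ) : ℤ) by omega,
        zpow_natCast]
    set p : ℕ := (n - (m j : ℤ)).toNat
    have hlin : Matrix.toEuclideanLin (A ^ n) (u j) =
        (WithLp.equiv 2 (Fin d → ℝ)).symm
          ((A ^ p) *ᵥ (fun i => ((v j i : ℝ)))) := by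
      rw [hv j, ← hmul, ← Matrix.mulVec_mulVec]
      rfl
    have hvec : ((A ^ p) *ᵥ (fun i => ((v j i : ℝ)))) =
        fun i => ((((Matrix.of Az) ^ p *ᵥ v j) i : ℤ) : ℝ) := by
      funext i
      rw [hA_pow p]
      simp [Matrix.mulVec, dotProduct, Matrix.map_apply]
    refine ⟨∑ i, ((Matrix.of Az) ^ p *ᵥ v j) i * w i, ?_⟩
    rw [hlin, hvec, hwv]
    simp [PiLp.inner_apply, RCLike.inner_apply, WithLp.equiv_symm_apply, PiLp.toLp_apply]
    exact Finset.sum_congr rfl (fun _ _ => mul_comm _ _)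
  -- value for n ≥ M₀
  have habs_top : ∀ n : ℤ, (M₀ : ℤ) ≤ n →
      ‖(∑ j, Complex.exp ((2 * Real.pi *
        (inner ℝ (Matrix.toEuclideanLin (A ^ n) (u j)) wv : ℝ) : ℝ) * Complex.I))‖
        = ((N - 1 : ℕ) : ℝ) := by
    intro n hn
    have : ∀ j : Fin (N - 1), Complex.exp ((2 * Real.pi *
        (inner ℝ (Matrix.toEuclideanLin (A ^ n) (u j)) wv : ℝ) : ℝ) * Complex.I) = 1 := by
      intro j
      obtain ⟨z, hz⟩ := fact1 n hn j
      rw [hz]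
      have : ((2 * Real.pi * (z : ℝ) : ℝ) : ℂ) * Complex.I
          = (z : ℂ) * (2 * Real.pi * Complex.I) := by
        push_cast
        ring
      rw [this, Complex.exp_int_mul_two_pi_mul_I]
    rw [Finset.sum_congr rfl (fun j _ => this j)]
    simp
  have hNne : ((N - 1 : ℕ) : ℝ) ≠ 1 := by
    have : (N - 1 : ℕ) ≠ 1 := by omega
    exact_mod_cast this
  -- Fact 2 : inner products tend to 0 along n = -k
  have fact2 : ∀ j, Tendsto (fun k : ℕ =>
      (inner ℝ (Matrix.toEuclideanLin (A ^ (-(k : ℤ))) (u j)) wv : ℝ)) atTop (𝓝 0) := by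
    intro j
    -- complexified matrix
    set Ac : Matrix (Fin d) (Fin d) ℂ := A.map ((↑) : ℝ → ℂ) with hAc
    have hdetc : IsUnit Ac.det := by
      rw [hAc, show A.map ((↑) : ℝ → ℂ) = (Complex.ofRealHom).mapMatrix A from rfl,
        ← RingHom.map_det]
      simp [isUnit_iff_ne_zero, hdet0]
    have hinv_map : (A⁻¹).map ((↑) : ℝ → ℂ) = Ac⁻¹ := by
      refine (Matrix.inv_eq_left_inv ?_).symm
      rw [hAc, show (A⁻¹).map ((↑) : ℝ → ℂ) = (Complex.ofRealHom).mapMatrix A⁻¹ from rfl,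
        show A.map ((↑) : ℝ → ℂ) = (Complex.ofRealHom).mapMatrix A from rfl,
        ← _root_.map_mul, Matrix.nonsing_inv_mul A hdet, _root_.map_one]
    have hspec : ∀ z ∈ spectrum ℂ Ac⁻¹, ‖z‖₊ < 1 :=
      aux_spec_inv Ac hdetc (fun z hz => hAeig z hz)
    have hent : ∀ i l : Fin d, Tendsto (fun k : ℕ => (A⁻¹ ^ k) i l) atTop (𝓝 0) := by
      intro i l
      have h := aux_pow_entry_tendsto_zero Ac⁻¹ hspec i l
      have heq : ∀ k : ℕ, (Ac⁻¹) ^ k = ((A⁻¹) ^ k).map ((↑) : ℝ → ℂ) := by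
        intro k
        rw [← hinv_map, show (A⁻¹).map ((↑) : ℝ → ℂ) = (Complex.ofRealHom).mapMatrix A⁻¹ from rfl,
          ← map_pow, RingHom.mapMatrix_apply]
        rfl
      have h2 : Tendsto (fun k : ℕ => (((A⁻¹ ^ k) i l : ℝ) : ℂ)) atTop (𝓝 0) := by
        simpa [heq, Matrix.map_apply] using h
      have h3 := (Complex.continuous_re.tendsto 0).comp h2
      simpa [Function.comp_def] using h3
    -- rewrite the inner product
    have hform : ∀ k : ℕ, (inner ℝ (Matrix.toEuclideanLin (A ^ (-(k : ℤ))) (u j)) wv : ℝ)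
        = ∑ i, (∑ l, (A⁻¹ ^ k) i l * (WithLp.equiv 2 (Fin d → ℝ)) (u j) l) * (w i : ℝ) := by
      intro k
      have hzp : A ^ (-(k : ℤ)) = A⁻¹ ^ k := by
        rw [Matrix.zpow_neg_natCast, Matrix.inv_pow']
      rw [hzp, Matrix.toEuclideanLin_apply, hwv]
      simp [PiLp.inner_apply, RCLike.inner_apply, WithLp.equiv_symm_apply, PiLp.toLp_apply,
        Matrix.mulVec, dotProduct]
      exact Finset.sum_congr rfl (fun _ _ => mul_comm _ _)
    rw [show (fun k : ℕ => (inner ℝ (Matrix.toEuclideanLin (A ^ (-(k : ℤ))) (u j)) wv : ℝ))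
        = fun k : ℕ => ∑ i, (∑ l, (A⁻¹ ^ k) i l * (WithLp.equiv 2 (Fin d → ℝ)) (u j) l) * (w i : ℝ)
      from funext hform]
    have : Tendsto (fun k : ℕ =>
        ∑ i, (∑ l, (A⁻¹ ^ k) i l * (WithLp.equiv 2 (Fin d → ℝ)) (u j) l) * (w i : ℝ))
        atTop (𝓝 (∑ i : Fin d, (∑ l : Fin d, 0 * (WithLp.equiv 2 (Fin d → ℝ)) (u j) l) * (w i : ℝ))) := by
      refine tendsto_finset_sum _ (fun i _ => ?_)
      refine Tendsto.mul_const _ ?_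
      exact tendsto_finset_sum _ (fun l _ => (hent i l).mul_const _)
    simpa using this
  -- convergence of abs of the sum along n = -k
  have htends : Tendsto (fun k : ℕ => ‖(∑ j, Complex.exp ((2 * Real.pi *
      (inner ℝ (Matrix.toEuclideanLin (A ^ (-(k : ℤ))) (u j)) wv : ℝ) : ℝ) * Complex.I))‖)
      atTop (𝓝 ((N - 1 : ℕ) : ℝ)) := by
    have hterm : ∀ j, Tendsto (fun k : ℕ => Complex.exp ((2 * Real.pi *
        (inner ℝ (Matrix.toEuclideanLin (A ^ (-(k : ℤ))) (u j)) wv : ℝ) : ℝ) * Complex.I))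
        atTop (𝓝 1) := by
      intro j
      have hcont : Continuous fun r : ℝ => Complex.exp (((2 * Real.pi * r : ℝ) : ℂ) * Complex.I) :=
        Complex.continuous_exp.comp ((Complex.continuous_ofReal.comp
          (continuous_const.mul continuous_id)).mul continuous_const)
      have := (hcont.tendsto 0).comp (fact2 j)
      simpa only [Function.comp_def, mul_zero, Complex.ofReal_zero, zero_mul,
        Complex.exp_zero] using this
    have hsum : Tendsto (fun k : ℕ => ∑ j, Complex.exp ((2 * Real.pi *
        (inner ℝ (Matrix.toEuclideanLin (A ^ (-(k : ℤ))) (u j)) wv : ℝ) : ℝ) * Complex.I))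
        atTop (𝓝 (∑ _j : Fin (N - 1), (1 : ℂ))) :=
      tendsto_finset_sum _ (fun j _ => hterm j)
    have habs := (continuous_norm.tendsto _).comp hsum
    simpa [Function.comp_def] using habs
  have hev : ∀ᶠ k : ℕ in atTop, ‖(∑ j, Complex.exp ((2 * Real.pi *
      (inner ℝ (Matrix.toEuclideanLin (A ^ (-(k : ℤ))) (u j)) wv : ℝ) : ℝ) * Complex.I))‖ ≠ 1 :=
    htends.eventually_ne hNne
  obtain ⟨K, hK⟩ := eventually_atTop.1 hev
  refine Set.Finite.subset (Set.finite_Icc (-(K : ℤ)) (M₀ : ℤ)) ?_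
  intro n hn
  rw [Set.mem_setOf_eq] at hn
  rw [Set.mem_Icc]
  constructor
  · by_contra hc
    push_neg at hc
    have hk : K ≤ (-n).toNat := by omega
    have hkn : -(((-n).toNat : ℕ) : ℤ) = n := by omega
    apply hK (-n).toNat hk
    rw [hkn]
    exact hn
  · by_contra hc
    push_neg at hc
    have := habs_top n (le_of_lt hc)
    rw [hn] at this
    exact hNne this.symm
end
end
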